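/- Let Λ be a row-finite k-graph with no sources. If Λ has no local periodicity at u ∈ Λ^0 and v ≤ u (i.e. vΛu ≠ ∅), then Λ has no local periodicity at v. -/

import Mathlib

set_option autoImplicit false

open scoped Classical

/-- A `k`-graph: a countable small category together with a degree functor
`d : Λ → ℕ^k` satisfying the unique factorization property.  Paths (morphisms)
form a single type; vertices (objects) are identified with the paths of
degree `0`. -/
structure KGraph (k : ℕ) where
  /-- the type of paths (morphisms) of the `k`-graph -/
  Path : Type
  countable : Countable Path
  nonempty : Nonempty Path
  /-- the range (codomain) vertex of a path -/
  r : Path → Path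
  /-- the source (domain) vertex of a path -/
  s : Path → Path
  /-- composition: `comp lam mu` is the path `λμ`, meaningful when `s lam = r mu` -/
  comp : Path → Path → Path
  /-- the degree functor -/
  d : Path → Fin k → ℕ
  d_r : ∀ lam, d (r lam) = 0
  d_s : ∀ lam, d (s lam) = 0
  r_r : ∀ lam, r (r lam) = r lam
  s_r : ∀ lam, s (r lam) = r lam
  r_s : ∀ lam, r (s lam) = s lam
  s_s : ∀ lam, s (s lam) = s lam
  id_comp : ∀ lam, comp (r lam) lam = lam
  comp_id : ∀ lam, comp lam (s lam) = lam
  r_comp : ∀ lam mu, s lam = r mu → r (comp lam mu) = r lam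
  s_comp : ∀ lam mu, s lam = r mu → s (comp lam mu) = s mu
  d_comp : ∀ lam mu, s lam = r mu → d (comp lam mu) = d lam + d mu
  comp_assoc : ∀ lam mu nu, s lam = r mu → s mu = r nu →
    comp (comp lam mu) nu = comp lam (comp mu nu)
  /-- the unique factorization property -/
  factor : ∀ lam (m n : Fin k → ℕ), d lam = m + n →
    ∃! p : Path × Path, s p.1 = r p.2 ∧ comp p.1 p.2 = lam ∧ d p.1 = m ∧ d p.2 = n

namespace KGraph

variable {k : ℕ}

/-- `v` is a vertex, i.e. an element of `Λ⁰`. -/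
def IsVertex (Λ : KGraph k) (v : Λ.Path) : Prop := Λ.d v = 0

/-- `v ≤ w`, i.e. `vΛw ≠ ∅`. -/
def Conn (Λ : KGraph k) (v w : Λ.Path) : Prop := ∃ lam, Λ.r lam = v ∧ Λ.s lam = w

/-- the canonical generator `e i` of `ℕ^k`. -/
def eVec (k : ℕ) (i : Fin k) : Fin k → ℕ := Pi.single i 1

/-- `Λ` is row-finite: `vΛⁿ` is finite for every vertex `v` and `n ∈ ℕ^k`. -/
def RowFinite (Λ : KGraph k) : Prop :=
  ∀ v, Λ.IsVertex v → ∀ n : Fin k → ℕ, {lam | Λ.r lam = v ∧ Λ.d lam = n}.Finite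

/-- `Λ` has no sources: `vΛ^{e i} ≠ ∅` for every vertex `v` and `i`. -/
def NoSources (Λ : KGraph k) : Prop :=
  ∀ v, Λ.IsVertex v → ∀ i : Fin k, ∃ lam, Λ.r lam = v ∧ Λ.d lam = eVec k i

/-- the middle factor `λ(m,n)`: the unique `σ` such that `λ = μστ` with
`d μ = m`, `d σ = n - m`, `d τ = d λ - n` (junk value if no factorization exists). -/
noncomputable def seg (Λ : KGraph k) (lam : Λ.Path) (m n : Fin k → ℕ) : Λ.Path :=
  if h : ∃ sig, ∃ mu tau, Λ.s mu = Λ.r sig ∧ Λ.s sig = Λ.r tau ∧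
      Λ.comp (Λ.comp mu sig) tau = lam ∧ Λ.d mu = m ∧ Λ.d sig = n - m ∧
      Λ.d tau = Λ.d lam - n
  then h.choose else lam

/-- `Λ` has no local periodicity at the vertex `v`. -/
def NoLocalPeriodicity (Λ : KGraph k) (v : Λ.Path) : Prop :=
  ∀ m n : Fin k → ℕ, m ≠ n →
    ∃ lam, Λ.r lam = v ∧ m ⊔ n ≤ Λ.d lam ∧
      Λ.seg lam m (m + Λ.d lam - (m ⊔ n)) ≠ Λ.seg lam n (n + Λ.d lam - (m ⊔ n))

/-- `Λ` is aperiodic: no vertex has local periodicity. -/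
def Aperiodic (Λ : KGraph k) : Prop := ∀ v, Λ.IsVertex v → Λ.NoLocalPeriodicity v

/-- a hereditary set of vertices -/
def Hereditary (Λ : KGraph k) (H : Set Λ.Path) : Prop :=
  ∀ v ∈ H, ∀ w, Λ.Conn v w → w ∈ H

/-- a saturated set of vertices -/
def Saturated (Λ : KGraph k) (H : Set Λ.Path) : Prop :=
  ∀ v, Λ.IsVertex v → (∃ mu, Λ.r mu = v) →
    (∃ i : Fin k, ∀ lam, Λ.r lam = v → Λ.d lam = eVec k i → Λ.s lam ∈ H) → v ∈ H

/-- the saturation of a set of vertices: the smallest saturated set containing it -/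
def saturation (Λ : KGraph k) (H : Set Λ.Path) : Set Λ.Path :=
  ⋂₀ {K : Set Λ.Path | H ⊆ K ∧ Λ.Saturated K}

/-- no local periodicity at the vertex `v` of the quotient graph `Γ(Λ \ H)`
(whose paths are the paths of `Λ` with source outside `H`). -/
def QuotNoLocalPeriodicity (Λ : KGraph k) (H : Set Λ.Path) (v : Λ.Path) : Prop :=
  ∀ m n : Fin k → ℕ, m ≠ n →
    ∃ lam, Λ.r lam = v ∧ Λ.s lam ∉ H ∧ m ⊔ n ≤ Λ.d lam ∧
      Λ.seg lam m (m + Λ.d lam - (m ⊔ n)) ≠ Λ.seg lam n (n + Λ.d lam - (m ⊔ n))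

/-- `Λ` is strongly aperiodic: `Γ(Λ \ H)` is aperiodic for every saturated
hereditary proper subset `H ⊊ Λ⁰`. -/
def StronglyAperiodic (Λ : KGraph k) : Prop :=
  ∀ H : Set Λ.Path, (∀ v ∈ H, Λ.IsVertex v) → Λ.Hereditary H → Λ.Saturated H →
    H ≠ {v | Λ.IsVertex v} →
    ∀ v, Λ.IsVertex v → v ∉ H → Λ.QuotNoLocalPeriodicity H v

/-- a maximal tail -/
def MaximalTail (Λ : KGraph k) (γ : Set Λ.Path) : Prop :=
  γ.Nonempty ∧ (∀ v ∈ γ, Λ.IsVertex v) ∧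
  (∀ v₁ ∈ γ, ∀ v₂ ∈ γ, ∃ w ∈ γ, Λ.Conn v₁ w ∧ Λ.Conn v₂ w) ∧
  (∀ v ∈ γ, ∀ i : Fin k, ∃ f, Λ.r f = v ∧ Λ.d f = eVec k i ∧ Λ.s f ∈ γ) ∧
  (∀ v, Λ.IsVertex v → ∀ w ∈ γ, Λ.Conn v w → v ∈ γ)

end KGraph

namespace KGraph

variable {k : ℕ}

lemma exists_factor (Λ : KGraph k) (lam : Λ.Path) (m : Fin k → ℕ) (h : m ≤ Λ.d lam) :
    ∃ mu rho, Λ.s mu = Λ.r rho ∧ Λ.comp mu rho = lam ∧ Λ.d mu = m ∧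
      Λ.d rho = Λ.d lam - m := by
  obtain ⟨⟨mu, rho⟩, ⟨h1, h2, h3, h4⟩, -⟩ := Λ.factor lam m (Λ.d lam - m)
    (by funext i; have hi : m i ≤ Λ.d lam i := h i
        simp only [Pi.add_apply, Pi.sub_apply]; omega)
  exact ⟨mu, rho, h1, h2, h3, h4⟩

lemma seg_unique (Λ : KGraph k) {lam : Λ.Path} {m n : Fin k → ℕ}
    (hmn : m ≤ n) (hn : n ≤ Λ.d lam)
    {mu sig tau mu' sig' tau' : Λ.Path}
    (h1 : Λ.s mu = Λ.r sig) (h2 : Λ.s sig = Λ.r tau)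
    (h3 : Λ.comp (Λ.comp mu sig) tau = lam)
    (h4 : Λ.d mu = m) (h5 : Λ.d sig = n - m) (h6 : Λ.d tau = Λ.d lam - n)
    (g1 : Λ.s mu' = Λ.r sig') (g2 : Λ.s sig' = Λ.r tau')
    (g3 : Λ.comp (Λ.comp mu' sig') tau' = lam)
    (g4 : Λ.d mu' = m) (g5 : Λ.d sig' = n - m) (g6 : Λ.d tau' = Λ.d lam - n) :
    sig = sig' := by
  have arith : (n - m) + (Λ.d lam - n) = Λ.d lam - m := by
    funext i; have i1 : m i ≤ n i := hmn i; have i2 : n i ≤ Λ.d lam i := hn i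
    simp only [Pi.add_apply, Pi.sub_apply]; omega
  have hdρ : Λ.d (Λ.comp sig tau) = Λ.d lam - m := by
    rw [Λ.d_comp sig tau h2, h5, h6, arith]
  have hdρ' : Λ.d (Λ.comp sig' tau') = Λ.d lam - m := by
    rw [Λ.d_comp sig' tau' g2, g5, g6, arith]
  have hsum : Λ.d lam = m + (Λ.d lam - m) := by
    funext i; have i1 : m i ≤ n i := hmn i; have i2 : n i ≤ Λ.d lam i := hn i
    simp only [Pi.add_apply, Pi.sub_apply]; omega
  obtain ⟨P, -, hPuniq⟩ := Λ.factor lam m (Λ.d lam - m) hsum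
  have e1 : (mu, Λ.comp sig tau) = P := by
    apply hPuniq
    refine ⟨by rw [Λ.r_comp sig tau h2]; exact h1, ?_, h4, hdρ⟩
    rw [← Λ.comp_assoc mu sig tau h1 h2, h3]
  have e1' : (mu', Λ.comp sig' tau') = P := by
    apply hPuniq
    refine ⟨by rw [Λ.r_comp sig' tau' g2]; exact g1, ?_, g4, hdρ'⟩
    rw [← Λ.comp_assoc mu' sig' tau' g1 g2, g3]
  have eρ : Λ.comp sig tau = Λ.comp sig' tau' :=
    congrArg Prod.snd (e1.trans e1'.symm)
  have hsum2 : Λ.d (Λ.comp sig tau) = (n - m) + (Λ.d lam - n) := by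
    rw [hdρ, arith]
  obtain ⟨Q, -, hQuniq⟩ := Λ.factor (Λ.comp sig tau) (n - m) (Λ.d lam - n) hsum2
  have e2 : (sig, tau) = Q := hQuniq _ ⟨h2, rfl, h5, h6⟩
  have e2' : (sig', tau') = Q := hQuniq _ ⟨g2, eρ.symm, g5, g6⟩
  exact congrArg Prod.fst (e2.trans e2'.symm)

lemma seg_eq (Λ : KGraph k) {lam : Λ.Path} {m n : Fin k → ℕ}
    (hmn : m ≤ n) (hn : n ≤ Λ.d lam)
    {mu sig tau : Λ.Path}
    (h1 : Λ.s mu = Λ.r sig) (h2 : Λ.s sig = Λ.r tau)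
    (h3 : Λ.comp (Λ.comp mu sig) tau = lam)
    (h4 : Λ.d mu = m) (h5 : Λ.d sig = n - m) (h6 : Λ.d tau = Λ.d lam - n) :
    Λ.seg lam m n = sig := by
  have hc : ∃ sig0, ∃ mu0 tau0, Λ.s mu0 = Λ.r sig0 ∧ Λ.s sig0 = Λ.r tau0 ∧
      Λ.comp (Λ.comp mu0 sig0) tau0 = lam ∧ Λ.d mu0 = m ∧ Λ.d sig0 = n - m ∧
      Λ.d tau0 = Λ.d lam - n := ⟨sig, mu, tau, h1, h2, h3, h4, h5, h6⟩
  obtain ⟨mu0, tau0, g1, g2, g3, g4, g5, g6⟩ := hc.choose_spec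
  have hd : Λ.seg lam m n = hc.choose := by
    rw [KGraph.seg, dif_pos hc]
  rw [hd]
  exact Λ.seg_unique hmn hn g1 g2 g3 g4 g5 g6 h1 h2 h3 h4 h5 h6

/-- segment of a composition lying in the second factor -/
lemma seg_comp (Λ : KGraph k) {mu tau : Λ.Path} (hsr : Λ.s mu = Λ.r tau)
    {a b : Fin k → ℕ} (hp : Λ.d mu ≤ a) (hab : a ≤ b)
    (hb : b ≤ Λ.d (Λ.comp mu tau)) :
    Λ.seg (Λ.comp mu tau) a b = Λ.seg tau (a - Λ.d mu) (b - Λ.d mu) := by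
  set p := Λ.d mu with hpdef
  have hdlam : Λ.d (Λ.comp mu tau) = p + Λ.d tau := Λ.d_comp mu tau hsr
  have hb' : ∀ i, b i ≤ p i + Λ.d tau i := by
    intro i; have hi : b i ≤ Λ.d (Λ.comp mu tau) i := hb i
    rw [hdlam] at hi; simpa using hi
  obtain ⟨alpha, rho, k1, k2, k3, k4⟩ := Λ.exists_factor tau (a - p)
    (by intro i
        have i1 : b i ≤ p i + Λ.d tau i := hb' i
        have i2 : p i ≤ a i := hp i
        have i3 : a i ≤ b i := hab i
        simp only [Pi.sub_apply]; omega)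
  obtain ⟨sig, beta, l1, l2, l3, l4⟩ := Λ.exists_factor rho (b - a)
    (by intro i
        have i1 : b i ≤ p i + Λ.d tau i := hb' i
        have i2 : p i ≤ a i := hp i
        have i3 : a i ≤ b i := hab i
        rw [k4]; simp only [Pi.sub_apply]; omega)
  have hralpha : Λ.r alpha = Λ.r tau := by rw [← k2, Λ.r_comp alpha rho k1]
  have hrsig : Λ.r sig = Λ.r rho := by rw [← l2, Λ.r_comp sig beta l1]
  have hssig : Λ.s sig = Λ.r beta := l1
  have k1' : Λ.s alpha = Λ.r sig := by rw [k1, hrsig]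
  have htau : Λ.comp (Λ.comp alpha sig) beta = tau := by
    rw [Λ.comp_assoc alpha sig beta k1' hssig, l2, k2]
  have hseg_tau : Λ.seg tau (a - p) (b - p) = sig := by
    refine Λ.seg_eq ?_ ?_ k1' hssig htau k3 ?_ ?_
    · intro i; have i2 : p i ≤ a i := hp i; have i3 : a i ≤ b i := hab i
      simp only [Pi.sub_apply]; omega
    · intro i; have i1 : b i ≤ p i + Λ.d tau i := hb' i
      simp only [Pi.sub_apply]; omega
    · rw [l3]; funext i
      have i2 : p i ≤ a i := hp i; have i3 : a i ≤ b i := hab i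
      simp only [Pi.sub_apply]; omega
    · rw [l4, k4]; funext i
      have i1 : b i ≤ p i + Λ.d tau i := hb' i
      have i2 : p i ≤ a i := hp i; have i3 : a i ≤ b i := hab i
      simp only [Pi.sub_apply]; omega
  have hsmualpha : Λ.s mu = Λ.r alpha := by rw [hsr, hralpha]
  have hcomp : Λ.comp (Λ.comp (Λ.comp mu alpha) sig) beta = Λ.comp mu tau := by
    rw [Λ.comp_assoc (Λ.comp mu alpha) sig beta
          (by rw [Λ.s_comp mu alpha hsmualpha]; exact k1') hssig, l2,
        Λ.comp_assoc mu alpha rho hsmualpha k1, k2]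
  have hseg_lam : Λ.seg (Λ.comp mu tau) a b = sig := by
    refine Λ.seg_eq hab hb ?_ hssig hcomp ?_ l3 ?_
    · rw [Λ.s_comp mu alpha hsmualpha]; exact k1'
    · rw [Λ.d_comp mu alpha hsmualpha, k3, ← hpdef]; funext i
      have i2 : p i ≤ a i := hp i
      simp only [Pi.add_apply, Pi.sub_apply]; omega
    · rw [l4, k4, hdlam]; funext i
      have i1 : b i ≤ p i + Λ.d tau i := hb' i
      have i2 : p i ≤ a i := hp i; have i3 : a i ≤ b i := hab i
      simp only [Pi.add_apply, Pi.sub_apply]; omega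
  rw [hseg_lam, hseg_tau]

/-- segment of a segment -/
lemma seg_seg (Λ : KGraph k) {lam : Λ.Path} {a b c d' : Fin k → ℕ}
    (hab : a ≤ b) (hb : b ≤ Λ.d lam) (hcd : c ≤ d') (hd : d' ≤ b - a) :
    Λ.seg (Λ.seg lam a b) c d' = Λ.seg lam (a + c) (a + d') := by
  obtain ⟨mu, rho, m1a, m1b, m1c, m1d⟩ := Λ.exists_factor lam a
    (le_trans hab hb)
  obtain ⟨sig, beta, m2a, m2b, m2c, m2d⟩ := Λ.exists_factor rho (b - a)
    (by intro i; rw [m1d]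
        have i1 : a i ≤ b i := hab i; have i2 : b i ≤ Λ.d lam i := hb i
        simp only [Pi.sub_apply]; omega)
  have hrsig : Λ.r sig = Λ.r rho := by rw [← m2b, Λ.r_comp sig beta m2a]
  have hsmusig : Λ.s mu = Λ.r sig := by rw [m1a, hrsig]
  have hlam : Λ.comp (Λ.comp mu sig) beta = lam := by
    rw [Λ.comp_assoc mu sig beta hsmusig m2a, m2b, m1b]
  have hdsig : Λ.d sig = b - a := m2c
  have hdbeta : Λ.d beta = Λ.d lam - b := by
    rw [m2d, m1d]; funext i
    have i1 : a i ≤ b i := hab i; have i2 : b i ≤ Λ.d lam i := hb i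
    simp only [Pi.sub_apply]; omega
  have hseg1 : Λ.seg lam a b = sig :=
    Λ.seg_eq hab hb hsmusig m2a hlam m1c hdsig hdbeta
  -- now factor sig
  have hcs : c ≤ Λ.d sig := by
    intro i; rw [hdsig]
    have i1 : c i ≤ d' i := hcd i; have i2 : d' i ≤ (b - a) i := hd i
    exact le_trans i1 i2
  obtain ⟨sig1, rho2, n1a, n1b, n1c, n1d⟩ := Λ.exists_factor sig c hcs
  obtain ⟨sig2, sig3, n2a, n2b, n2c, n2d⟩ := Λ.exists_factor rho2 (d' - c)
    (by intro i; rw [n1d, hdsig]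
        have i1 : c i ≤ d' i := hcd i; have i2 : d' i ≤ (b - a) i := hd i
        simp only [Pi.sub_apply] at i2 ⊢; omega)
  have hrsig2 : Λ.r sig2 = Λ.r rho2 := by rw [← n2b, Λ.r_comp sig2 sig3 n2a]
  have hssig1 : Λ.s sig1 = Λ.r sig2 := by rw [n1a, hrsig2]
  have hsig : Λ.comp (Λ.comp sig1 sig2) sig3 = sig := by
    rw [Λ.comp_assoc sig1 sig2 sig3 hssig1 n2a, n2b, n1b]
  have hdsig3 : Λ.d sig3 = Λ.d sig - d' := by
    rw [n2d, n1d]; funext i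
    have i1 : c i ≤ d' i := hcd i
    simp only [Pi.sub_apply]
    omega
  have hseg2 : Λ.seg sig c d' = sig2 :=
    Λ.seg_eq hcd (by rw [hdsig]; exact hd) hssig1 n2a hsig n1c n2c hdsig3
  -- identify seg lam (a+c) (a+d') with sig2
  have hs12 : Λ.s (Λ.comp sig1 sig2) = Λ.r sig3 := by
    rw [Λ.s_comp sig1 sig2 hssig1]; exact n2a
  have hssig3 : Λ.s sig3 = Λ.r beta := by
    have e1 : Λ.s sig = Λ.s sig3 := by
      rw [← hsig, Λ.s_comp (Λ.comp sig1 sig2) sig3 hs12]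
    rw [← e1]; exact m2a
  have hsmusig1 : Λ.s mu = Λ.r sig1 := by
    rw [hsmusig, ← n1b, Λ.r_comp sig1 rho2 n1a]
  have hbig : Λ.comp (Λ.comp (Λ.comp mu sig1) sig2) (Λ.comp sig3 beta) = lam := by
    rw [Λ.comp_assoc mu sig1 sig2 hsmusig1 hssig1,
        Λ.comp_assoc mu (Λ.comp sig1 sig2) (Λ.comp sig3 beta)
          (by rw [Λ.r_comp sig1 sig2 hssig1]; exact hsmusig1)
          (by rw [Λ.s_comp sig1 sig2 hssig1, Λ.r_comp sig3 beta hssig3]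
              exact n2a),
        ← Λ.comp_assoc (Λ.comp sig1 sig2) sig3 beta hs12 hssig3, hsig,
        ← Λ.comp_assoc mu sig beta hsmusig m2a, hlam]
  have hseg3 : Λ.seg lam (a + c) (a + d') = sig2 := by
    refine Λ.seg_eq ?_ ?_ ?_ ?_ hbig ?_ ?_ ?_
    · intro i; have i1 : c i ≤ d' i := hcd i
      simp only [Pi.add_apply]; omega
    · intro i
      have i1 : d' i ≤ (b - a) i := hd i; have i2 : a i ≤ b i := hab i
      have i3 : b i ≤ Λ.d lam i := hb i
      simp only [Pi.add_apply, Pi.sub_apply] at i1 ⊢; omega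
    · rw [Λ.s_comp mu sig1 hsmusig1]; exact hssig1
    · rw [Λ.r_comp sig3 beta hssig3]; exact n2a
    · rw [Λ.d_comp mu sig1 hsmusig1, m1c, n1c]
    · rw [n2c]; funext i
      simp only [Pi.add_apply, Pi.sub_apply]; omega
    · rw [Λ.d_comp sig3 beta hssig3, hdsig3, hdsig, hdbeta]; funext i
      have i1 : c i ≤ d' i := hcd i; have i2 : d' i ≤ (b - a) i := hd i
      have i3 : a i ≤ b i := hab i; have i4 : b i ≤ Λ.d lam i := hb i
      simp only [Pi.add_apply, Pi.sub_apply] at i2 ⊢; omega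
  rw [hseg1, hseg2, hseg3]

end KGraph

/-- No local periodicity passes from `u` to any `v` with `v ≤ u`. -/
theorem stmt4 {k : ℕ} (Λ : KGraph k) (hrf : Λ.RowFinite) (hns : Λ.NoSources)
    (u v : Λ.Path) (hu : Λ.NoLocalPeriodicity u) (hvu : Λ.Conn v u) :
    Λ.NoLocalPeriodicity v := by
  obtain ⟨mu, hrmu, hsmu⟩ := hvu
  intro m n hmn
  set p := Λ.d mu with hp
  have hne : m + p ≠ n + p := fun h => hmn (by
    funext i; have := congrFun h i
    simp only [Pi.add_apply] at this; omega)
  obtain ⟨tau, hrtau, hdtau, hseg⟩ := hu (m + p) (n + p) hne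
  have hsr : Λ.s mu = Λ.r tau := hsmu.trans hrtau.symm
  have key : ∀ i, max (m i) (n i) + p i ≤ Λ.d tau i := by
    intro i
    have h1 : ((m + p) ⊔ (n + p)) i ≤ Λ.d tau i := hdtau i
    simp only [Pi.sup_apply, Pi.add_apply] at h1; omega
  have hds : ∀ i, Λ.d (Λ.comp mu tau) i = p i + Λ.d tau i := by
    intro i; rw [Λ.d_comp mu tau hsr, ← hp]; simp only [Pi.add_apply]
  refine ⟨Λ.comp mu tau, by rw [Λ.r_comp mu tau hsr, hrmu], ?_, ?_⟩
  · intro i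
    have i1 := key i; have i2 := hds i
    simp only [Pi.sup_apply]; omega
  · intro heq
    apply hseg
    -- the generic step, for q = m and q = n
    have step : ∀ q : Fin k → ℕ, q ≤ m ⊔ n →
        Λ.seg tau (q + p) (q + Λ.d tau - (m ⊔ n)) =
        Λ.seg (Λ.seg (Λ.comp mu tau) q (q + Λ.d (Λ.comp mu tau) - (m ⊔ n)))
          (p + p) (Λ.d (Λ.comp mu tau) - (m ⊔ n)) := by
      intro q hq
      have hq' : ∀ i, q i ≤ max (m i) (n i) := by
        intro i; have := hq i; simpa [Pi.sup_apply] using this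
      have c1 : Λ.seg (Λ.comp mu tau) (q + (p + p))
          (q + Λ.d (Λ.comp mu tau) - (m ⊔ n)) =
          Λ.seg tau (q + p) (q + Λ.d tau - (m ⊔ n)) := by
        have e1 : (q + (p + p)) - p = q + p := by
          funext i; simp only [Pi.add_apply, Pi.sub_apply]; omega
        have e2 : (q + Λ.d (Λ.comp mu tau) - (m ⊔ n)) - p
            = q + Λ.d tau - (m ⊔ n) := by
          funext i
          have i1 := key i; have i2 := hds i; have i3 := hq' i
          simp only [Pi.add_apply, Pi.sub_apply, Pi.sup_apply]
          omega
        have c1' := Λ.seg_comp hsr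
          (a := q + (p + p)) (b := q + Λ.d (Λ.comp mu tau) - (m ⊔ n))
          (by intro i; rw [← hp]; simp only [Pi.add_apply]; omega)
          (by intro i
              have i1 := key i; have i2 := hds i; have i3 := hq' i
              simp only [Pi.add_apply, Pi.sub_apply, Pi.sup_apply]
              omega)
          (by intro i
              have i1 := key i; have i2 := hds i; have i3 := hq' i
              simp only [Pi.add_apply, Pi.sub_apply, Pi.sup_apply]
              omega)
        rw [← hp, e1, e2] at c1'
        exact c1'
      have e3 : q + (Λ.d (Λ.comp mu tau) - (m ⊔ n))
          = q + Λ.d (Λ.comp mu tau) - (m ⊔ n) := by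
        funext i
        have i1 := key i; have i2 := hds i
        simp only [Pi.add_apply, Pi.sub_apply, Pi.sup_apply]; omega
      have c2 := Λ.seg_seg (lam := Λ.comp mu tau)
        (a := q) (b := q + Λ.d (Λ.comp mu tau) - (m ⊔ n))
        (c := p + p) (d' := Λ.d (Λ.comp mu tau) - (m ⊔ n))
        (by intro i
            have i1 := key i; have i2 := hds i; have i3 := hq' i
            simp only [Pi.add_apply, Pi.sub_apply, Pi.sup_apply]
            omega)
        (by intro i
            have i1 := key i; have i2 := hds i; have i3 := hq' i
            simp only [Pi.add_apply, Pi.sub_apply, Pi.sup_apply]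
            omega)
        (by intro i
            have i1 := key i; have i2 := hds i; have i3 := hq' i
            simp only [Pi.add_apply, Pi.sub_apply, Pi.sup_apply]
            omega)
        (by intro i
            have i1 := key i; have i2 := hds i; have i3 := hq' i
            simp only [Pi.add_apply, Pi.sub_apply, Pi.sup_apply]
            omega)
      rw [e3] at c2
      exact c1.symm.trans c2.symm
    have esup : (m + p) ⊔ (n + p) = (m ⊔ n) + p := by
      funext i
      simp only [Pi.sup_apply, Pi.add_apply]; omega
    have em : (m + p) + Λ.d tau - ((m ⊔ n) + p) = m + Λ.d tau - (m ⊔ n) := by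
      funext i
      simp only [Pi.add_apply, Pi.sub_apply, Pi.sup_apply]; omega
    have en : (n + p) + Λ.d tau - ((m ⊔ n) + p) = n + Λ.d tau - (m ⊔ n) := by
      funext i
      simp only [Pi.add_apply, Pi.sub_apply, Pi.sup_apply]; omega
    rw [esup, em, en, step m le_sup_left, step n le_sup_right, heq]
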